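/- Suppose G is the path P = (1,2,…,m) and all agents have binary additive valuations whose approval sets A(i) are connected on the path (intervals) and are non-nested: there is no pair of agents i, j with min A(i) < min A(j) and max A(j) < max A(i). Then there exists a connected allocation that is an MMS allocation and maximizes utilitarian social welfare among all connected allocations. -/

import Mathlib

open Finset

/-- A finite set of items is *connected* in the item graph `G` if the induced
subgraph is preconnected (the empty set counts as connected). -/
def ConnSet {V : Type*} (G : SimpleGraph V) (X : Finset V) : Prop :=
  (G.induce (X : Set V)).Preconnected

/-- `π` is a connected allocation of the items in `R` among the agents in `N`. -/
def IsConnAllocOn {V N : Type*} [DecidableEq V] (G : SimpleGraph V)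
    (R : Finset V) (π : N → Finset V) : Prop :=
  (∀ i, π i ⊆ R) ∧ (∀ i, ConnSet G (π i)) ∧
    (∀ i j, i ≠ j → Disjoint (π i) (π j)) ∧ (∀ v ∈ R, ∃ i, v ∈ π i)

/-- `π` is a connected allocation of all items among the agents in `N`. -/
def IsConnAlloc {V N : Type*} [Fintype V] [DecidableEq V] (G : SimpleGraph V)
    (π : N → Finset V) : Prop :=
  IsConnAllocOn G Finset.univ π

/-- `π'` is a Pareto-improvement of `π`. -/
def ParetoImproves {V N : Type*} (u : N → Finset V → ℝ)
    (π' π : N → Finset V) : Prop :=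
  (∀ i, u i (π i) ≤ u i (π' i)) ∧ ∃ i, u i (π i) < u i (π' i)

/-- `π` is Pareto-optimal: no connected allocation Pareto-improves it. -/
def ParetoOptimal {V N : Type*} [Fintype V] [DecidableEq V] (G : SimpleGraph V)
    (u : N → Finset V → ℝ) (π : N → Finset V) : Prop :=
  ∀ π', IsConnAlloc G π' → ¬ ParetoImproves u π' π

/-- `π` satisfies EF1: any envy can be removed by deleting a single item
(keeping the envied bundle connected). -/
def EF1 {V N : Type*} [Fintype V] [DecidableEq V] (G : SimpleGraph V)
    (u : N → Finset V → ℝ) (π : N → Finset V) : Prop :=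
  ∀ i j, u i (π j) ≤ u i (π i) ∨
    ∃ v ∈ π j, ConnSet G ((π j).erase v) ∧ u i ((π j).erase v) ≤ u i (π i)

/-- The maximin fair share of an agent with valuation `u`, when the items are
divided into `|N|` connected bundles. -/
noncomputable def mmsVal {V : Type*} (N : Type*) [Fintype V] [DecidableEq V]
    (G : SimpleGraph V) (u : Finset V → ℝ) : ℝ :=
  sSup {x : ℝ | ∃ P : N → Finset V, IsConnAlloc G P ∧
    x = sInf (Set.range fun j => u (P j))}

/-- `π` is an MMS allocation: every agent gets at least her maximin fair share. -/
def IsMMS {V N : Type*} [Fintype V] [DecidableEq V] (G : SimpleGraph V)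
    (u : N → Finset V → ℝ) (π : N → Finset V) : Prop :=
  ∀ i, mmsVal N G (u i) ≤ u i (π i)

/-- interval bundle of items with values in `[a, b)` -/
def iv (m a b : ℕ) : Finset (Fin m) := univ.filter fun v : Fin m => a ≤ v.val ∧ v.val < b

lemma mem_iv {m a b : ℕ} {v : Fin m} : v ∈ iv m a b ↔ a ≤ v.val ∧ v.val < b := by
  simp [iv]

lemma card_iv (m a b : ℕ) : (iv m a b).card = min b m - a := by
  rw [← Nat.card_Ico a (min b m)]
  apply Finset.card_bij (fun (v : Fin m) _ => v.val)
  · intro v hv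
    rw [mem_iv] at hv
    exact Finset.mem_Ico.2 ⟨hv.1, lt_min hv.2 v.isLt⟩
  · intro a₁ h₁ a₂ h₂ h; exact Fin.val_injective h
  · intro x hx
    rw [Finset.mem_Ico] at hx
    have hxm : x < m := lt_of_lt_of_le hx.2 (min_le_right _ _)
    exact ⟨⟨x, hxm⟩, mem_iv.2 ⟨hx.1, lt_of_lt_of_le hx.2 (min_le_left _ _)⟩, rfl⟩

lemma connSet_empty {m : ℕ} {G : SimpleGraph (Fin m)} : ConnSet G (∅ : Finset (Fin m)) := by
  intro u
  exact absurd u.2 (by simp)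

lemma connSet_iv (m a b : ℕ) : ConnSet (SimpleGraph.pathGraph m) (iv m a b) := by
  have key : ∀ d : ℕ, ∀ u v : ((iv m a b : Finset (Fin m)) : Set (Fin m)),
      (v : Fin m).val = (u : Fin m).val + d →
      ((SimpleGraph.pathGraph m).induce _).Reachable u v := by
    intro d
    induction d with
    | zero => intro u v h; have : u = v := Subtype.ext (Fin.ext h.symm); rw [this]
    | succ d ih =>
      intro u v h
      have hu := u.2
      have hv := v.2
      simp only [Finset.mem_coe, mem_iv] at hu hv
      have hum : (u : Fin m).val + 1 < m := by
        have : (u : Fin m).val + 1 ≤ (v : Fin m).val := by omega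
        exact lt_of_le_of_lt this (v : Fin m).isLt
      have hw : ((⟨(u : Fin m).val + 1, hum⟩ : Fin m)) ∈ iv m a b := by
        rw [mem_iv]
        refine ⟨?_, ?_⟩
        · show a ≤ (u : Fin m).val + 1; omega
        · show (u : Fin m).val + 1 < b; omega
      set w : ((iv m a b : Finset (Fin m)) : Set (Fin m)) := ⟨⟨(u : Fin m).val + 1, hum⟩, by
        simpa using hw⟩ with hwdef
      have hadj : ((SimpleGraph.pathGraph m).induce _).Adj u w := by
        simp only [SimpleGraph.comap_adj, SimpleGraph.pathGraph_adj]
        left; rfl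
      exact (hadj.reachable).trans (ih w v (by simp [hwdef, w]; omega))
  intro u v
  rcases le_total ((u : Fin m).val) ((v : Fin m).val) with h | h
  · exact key ((v : Fin m).val - (u : Fin m).val) u v (by omega)
  · exact (key ((u : Fin m).val - (v : Fin m).val) v u (by omega)).symm

lemma walk_hits {m : ℕ} {S : Set (Fin m)} {a b : S}
    (w : ((SimpleGraph.pathGraph m).induce S).Walk a b) (x : ℕ)
    (hax : (a : Fin m).val ≤ x) (hxb : x ≤ (b : Fin m).val) :
    ∃ z ∈ w.support, (z : Fin m).val = x := by
  induction w with
  | @nil u => exact ⟨u, by simp, by omega⟩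
  | @cons c c' b h p ih =>
    by_cases hc : (c : Fin m).val = x
    · exact ⟨c, by simp, hc⟩
    · have hadj : (c : Fin m).val + 1 = (c' : Fin m).val ∨ (c' : Fin m).val + 1 = (c : Fin m).val := by
        simpa [SimpleGraph.comap_adj, SimpleGraph.pathGraph_adj] using h
      have hc' : (c' : Fin m).val ≤ x := by omega
      obtain ⟨z, hz, hzx⟩ := ih hc' hxb
      exact ⟨z, by simp [hz], hzx⟩

lemma mem_of_connSet {m : ℕ} {X : Finset (Fin m)} (h : ConnSet (SimpleGraph.pathGraph m) X)
    {u v w : Fin m} (hu : u ∈ X) (hv : v ∈ X) (h1 : u.val ≤ w.val) (h2 : w.val ≤ v.val) :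
    w ∈ X := by
  obtain ⟨p⟩ := h ⟨u, by simpa using hu⟩ ⟨v, by simpa using hv⟩
  obtain ⟨z, _, hz⟩ := walk_hits p w.val h1 h2
  have : (z : Fin m) = w := Fin.ext hz
  rw [← this]
  simpa using z.2

lemma sum_div_le (n : ℕ) (f : ℕ → ℕ) (s : Finset ℕ) :
    ∑ t ∈ s, f t / n ≤ (∑ t ∈ s, f t) / n := by
  rcases Nat.eq_zero_or_pos n with h | h
  · simp [h]
  · rw [Nat.le_div_iff_mul_le h, Finset.sum_mul]
    exact Finset.sum_le_sum fun t _ => Nat.div_mul_le_self _ _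

lemma count_key {n p : ℕ} (hpn : p ≤ n) (l r : ℕ → ℕ)
    (hl : ∀ a b, a ≤ b → b < p → l a ≤ l b) (hr : ∀ a b, a ≤ b → b < p → r a ≤ r b)
    (hlr : ∀ k, k < p → l k ≤ r k)
    (a j : ℕ) (haj : a ≤ j) (hj : j < p) :
    l a + ∑ t ∈ Finset.Icc a j, (r t - l t + 1) / n ≤ r j + 1 := by
  rcases Nat.eq_zero_or_pos n with hn | hn
  · simp [hn]
    exact le_trans (le_trans (hl a j haj hj) (hlr j hj)) (Nat.le_succ _)
  have hterm : ∀ t ∈ Finset.Icc a j, r t - l t + 1 ≤ r j - l a + 1 := by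
    intro t ht
    rw [Finset.mem_Icc] at ht
    have h1 : r t ≤ r j := hr t j ht.2 hj
    have h2 : l a ≤ l t := hl a t ht.1 (lt_of_le_of_lt ht.2 hj)
    omega
  have hsum : ∑ t ∈ Finset.Icc a j, (r t - l t + 1) ≤ (j + 1 - a) * (r j - l a + 1) := by
    calc ∑ t ∈ Finset.Icc a j, (r t - l t + 1)
        ≤ ∑ _t ∈ Finset.Icc a j, (r j - l a + 1) := Finset.sum_le_sum hterm
      _ = (j + 1 - a) * (r j - l a + 1) := by rw [Finset.sum_const, Nat.card_Icc, smul_eq_mul]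
  have h2 : ∑ t ∈ Finset.Icc a j, (r t - l t + 1) / n ≤ r j - l a + 1 := by
    calc ∑ t ∈ Finset.Icc a j, (r t - l t + 1) / n
        ≤ (∑ t ∈ Finset.Icc a j, (r t - l t + 1)) / n := sum_div_le n _ _
      _ ≤ ((j + 1 - a) * (r j - l a + 1)) / n := Nat.div_le_div_right hsum
      _ ≤ (n * (r j - l a + 1)) / n := Nat.div_le_div_right (Nat.mul_le_mul_right _ (by omega))
      _ = r j - l a + 1 := Nat.mul_div_cancel_left _ hn
  have hla : l a ≤ r j := le_trans (hl a j haj hj) (hlr j hj)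
  omega

lemma max_add_le {a b s r : ℕ} (h1 : a + s ≤ r) (h2 : b + s ≤ r) : max a b + s ≤ r := by
  rcases max_cases a b with ⟨h, _⟩ | ⟨h, _⟩ <;> omega

/-- the greedy cut points -/
def cf (n m p : ℕ) (l r : ℕ → ℕ) : ℕ → ℕ
  | 0 => 0
  | k + 1 => if k + 1 = p then m else
      max (cf n m p l r k)
        (max (min (l (k + 1)) (r k + 1))
          (min (r k + 1) (max (l k) (cf n m p l r k) + (r k - l k + 1) / n)))

lemma cuts_exist (n m p : ℕ) (hpn : p ≤ n) (hp : 0 < p) (l r : ℕ → ℕ)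
    (hl : ∀ a b, a ≤ b → b < p → l a ≤ l b) (hr : ∀ a b, a ≤ b → b < p → r a ≤ r b)
    (hlr : ∀ k, k < p → l k ≤ r k) (hrm : ∀ k, k < p → r k < m) :
    ∃ c : ℕ → ℕ, c 0 = 0 ∧ c p = m ∧ (∀ a b, a ≤ b → b ≤ p → c a ≤ c b) ∧
      (∀ k, k < p → max (c k) (l k) + (r k - l k + 1) / n ≤ min (c (k + 1)) (r k + 1)) ∧
      (∀ k, k < p → ∀ v, c k ≤ v → v < c (k + 1) →
        ∀ t, t < p → l t ≤ v → v ≤ r t → l k ≤ v ∧ v ≤ r k) := by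
  set c : ℕ → ℕ := cf n m p l r with hc
  have hc0 : c 0 = 0 := rfl
  have hcsucc : ∀ k, k + 1 ≠ p → c (k + 1) =
      max (c k) (max (min (l (k + 1)) (r k + 1))
        (min (r k + 1) (max (l k) (c k) + (r k - l k + 1) / n))) := by
    intro k hk
    rw [hc, cf]
    simp [hk]
  have hcp : c p = m := by
    obtain ⟨j, rfl⟩ := Nat.exists_eq_add_of_lt hp
    rw [zero_add, hc, cf]
    simp
  -- KEY invariant
  have key : ∀ k, ∀ j, k ≤ j → j < p → c k + ∑ t ∈ Finset.Icc k j, (r t - l t + 1) / n ≤ r j + 1 := by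
    intro k
    induction k with
    | zero =>
      intro j _ hj
      rw [hc0, zero_add]
      have := count_key hpn l r hl hr hlr 0 j (Nat.zero_le _) hj
      omega
    | succ k ih =>
      intro j hkj hj
      have hkp : k + 1 ≠ p := by omega
      have hicc : ∑ t ∈ Finset.Icc k j, (r t - l t + 1) / n
          = (r k - l k + 1) / n + ∑ t ∈ Finset.Icc (k + 1) j, (r t - l t + 1) / n := by
        rw [Finset.Icc_add_one_left_eq_Ioc, Finset.Icc_eq_cons_Ioc (by omega : k ≤ j), Finset.sum_cons]
      have h1 := ih j (by omega) hj
      have h2 := count_key hpn l r hl hr hlr (k + 1) j hkj hj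
      have h3 : max (l k) (c k) + (r k - l k + 1) / n
          + ∑ t ∈ Finset.Icc (k + 1) j, (r t - l t + 1) / n ≤ r j + 1 := by
        have h4 := count_key hpn l r hl hr hlr k j (by omega) hj
        rw [add_assoc]
        exact max_add_le (by omega) (by omega)
      rw [hcsucc k hkp]
      have e1 := min_le_left (l (k + 1)) (r k + 1)
      have e2 := min_le_right (r k + 1) (max (l k) (c k) + (r k - l k + 1) / n)
      refine max_add_le ?_ (max_add_le ?_ ?_)
      · exact le_trans (Nat.add_le_add_left (Finset.sum_le_sum_of_subset
          (Finset.Icc_subset_Icc_left (by omega))) _) h1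
      · exact le_trans (Nat.add_le_add_right e1 _) h2
      · exact le_trans (Nat.add_le_add_right e2 _) h3
  -- I2
  have I2 : ∀ k, k + 1 < p → c (k + 1) ≤ max (l (k + 1)) (r k + 1) := by
    intro k
    induction k with
    | zero =>
      intro h
      rw [hcsucc 0 (by omega)]
      refine max_le ?_ (max_le ?_ ?_)
      · rw [hc0]; exact Nat.zero_le _
      · exact le_trans (min_le_left _ _) (le_max_left _ _)
      · exact le_trans (min_le_left _ _) (le_max_right _ _)
    | succ k ih =>
      intro h
      rw [hcsucc (k + 1) (by omega)]
      have h1 : c (k + 1) ≤ max (l (k + 1)) (r k + 1) := ih (by omega)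
      have h4 : l (k + 1) ≤ l (k + 2) := hl _ _ (by omega) h
      have h5 : r k ≤ r (k + 1) := hr _ _ (by omega) (by omega)
      refine max_le ?_ (max_le ?_ ?_)
      · exact le_trans h1 (max_le_max h4 (by omega))
      · exact le_trans (min_le_left _ _) (le_max_left _ _)
      · exact le_trans (min_le_left _ _) (le_max_right _ _)
  -- monotone single-step
  have mono1 : ∀ k, k + 1 ≤ p → c k ≤ c (k + 1) := by
    intro k hk
    by_cases h : k + 1 = p
    · subst h
      rw [hcp]
      rcases Nat.eq_zero_or_pos k with rfl | hk0
      · rw [hc0]; exact Nat.zero_le _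
      · obtain ⟨j, rfl⟩ := Nat.exists_eq_add_of_lt hk0
        rw [zero_add]
        have h3 := I2 j (by omega)
        have h4 : l (j + 1) ≤ r (j + 1) := hlr _ (by omega)
        have h5 : r (j + 1) < m := hrm _ (by omega)
        have h6 : r j < m := hrm _ (by omega)
        rcases max_cases (l (j + 1)) (r j + 1) with ⟨h', _⟩ | ⟨h', _⟩ <;> omega
    · rw [hcsucc k h]
      exact le_max_left _ _
  have mono : ∀ a b, a ≤ b → b ≤ p → c a ≤ c b := by
    intro a b hab
    induction b with
    | zero => intro _; have : a = 0 := by omega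
              rw [this]
    | succ b ihb =>
      intro hbp
      rcases Nat.eq_or_lt_of_le hab with rfl | h
      · exact le_refl _
      · exact le_trans (ihb (by omega) (by omega)) (mono1 b hbp)
  refine ⟨c, hc0, hcp, mono, ?_, ?_⟩
  · -- quota
    intro k hk
    have h1 : c k + (r k - l k + 1) / n ≤ r k + 1 := by
      have := key k k (le_refl _) hk
      rw [Finset.Icc_self, Finset.sum_singleton] at this
      omega
    have h2 : l k + (r k - l k + 1) / n ≤ r k + 1 := by
      have hq1 : (r k - l k + 1) / n ≤ r k - l k + 1 := Nat.div_le_self _ _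
      have := hlr k hk
      omega
    have hub : max (c k) (l k) + (r k - l k + 1) / n ≤ r k + 1 := by
      rcases max_cases (c k) (l k) with ⟨h, _⟩ | ⟨h, _⟩ <;> omega
    rw [le_min_iff]
    refine ⟨?_, hub⟩
    by_cases h : k + 1 = p
    · rw [h, hcp]
      have := hrm k hk
      omega
    · rw [hcsucc k h]
      refine le_trans ?_ (le_max_of_le_right (le_max_right _ _))
      rw [le_min_iff]
      exact ⟨hub, by rw [max_comm (l k) (c k)]⟩
  · -- coverage
    intro k hk v hcv hvc t ht hltv hvrt
    constructor
    · -- l k ≤ v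
      by_contra hcon
      push_neg at hcon
      rcases Nat.eq_zero_or_pos k with rfl | hk0
      · have : l 0 ≤ l t := hl 0 t (Nat.zero_le _) ht
        omega
      · obtain ⟨j, rfl⟩ := Nat.exists_eq_add_of_lt hk0
        rw [zero_add] at *
        have hcj : min (l (j + 1)) (r j + 1) ≤ c (j + 1) := by
          by_cases h : j + 1 = p
          · rw [h, hcp]
            have h1 := hrm j (by omega)
            have h2 := hlr (j + 1) hk
            have h3 := hrm (j + 1) hk
            rcases min_cases (l (j + 1)) (r j + 1) with ⟨h', _⟩ | ⟨h', _⟩ <;> omega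
          · rw [hcsucc j h]
            exact le_max_of_le_right (le_max_left _ _)
        rcases min_cases (l (j + 1)) (r j + 1) with ⟨h', _⟩ | ⟨h', h''⟩ <;> rw [h'] at hcj
        · omega
        · rcases Nat.lt_or_ge t (j + 1) with htj | htj
          · have : r t ≤ r j := hr t j (by omega) (by omega)
            omega
          · have : l (j + 1) ≤ l t := hl _ _ htj ht
            omega
    · -- v ≤ r k
      by_contra hcon
      push_neg at hcon
      by_cases h : k + 1 = p
      · have : r t ≤ r k := hr t k (by omega) hk
        omega
      · have h2 : c (k + 1) ≤ max (l (k + 1)) (r k + 1) := I2 k (by omega)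
        rcases max_cases (l (k + 1)) (r k + 1) with ⟨h', _⟩ | ⟨h', _⟩ <;> rw [h'] at h2
        · rcases Nat.lt_or_ge t (k + 1) with htj | htj
          · have : r t ≤ r k := hr t k (by omega) hk
            omega
          · have : l (k + 1) ≤ l t := hl _ _ htj ht
            omega
        · omega

lemma exists_step (c : ℕ → ℕ) (p x : ℕ) (hp : 0 < p) (h0 : c 0 ≤ x) (hx : x < c p) :
    ∃ k, k < p ∧ c k ≤ x ∧ x < c (k + 1) := by
  induction p with
  | zero => omega
  | succ p ih =>
    by_cases h : c p ≤ x
    · exact ⟨p, by omega, h, hx⟩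
    · push_neg at h
      have hp0 : 0 < p := by
        rcases Nat.eq_zero_or_pos p with rfl | h'
        · omega
        · exact h'
      obtain ⟨k, hk, h1, h2⟩ := ih hp0 h
      exact ⟨k, by omega, h1, h2⟩

theorem stmt17 {m : ℕ} {N : Type*} [Fintype N] [Nonempty N]
    (A : N → Finset (Fin m))
    (hconn : ∀ i, ConnSet (SimpleGraph.pathGraph m) (A i))
    (hnonnested : ∀ i j (hi : (A i).Nonempty) (hj : (A j).Nonempty),
      ¬ ((A i).min' hi < (A j).min' hj ∧ (A j).max' hj < (A i).max' hi))
    (u : N → Finset (Fin m) → ℝ)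
    (hu : ∀ i X, u i X = ((X ∩ A i).card : ℝ)) :
    ∃ π : N → Finset (Fin m),
      IsConnAlloc (SimpleGraph.pathGraph m) π ∧
      IsMMS (SimpleGraph.pathGraph m) u π ∧
      ∀ π', IsConnAlloc (SimpleGraph.pathGraph m) π' →
        ∑ i, u i (π' i) ≤ ∑ i, u i (π i) := by
  classical
  have i₀ : N := Classical.arbitrary N
  set n := Fintype.card N with hndef
  have hn0 : 0 < n := Fintype.card_pos
  set lA : N → ℕ := fun i => if h : (A i).Nonempty then ((A i).min' h).val else 0 with hlA
  set rA : N → ℕ := fun i => if h : (A i).Nonempty then ((A i).max' h).val else 0 with hrA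
  have hlAeq : ∀ i (h : (A i).Nonempty), lA i = ((A i).min' h).val := by
    intro i h; simp [hlA, dif_pos h]
  have hrAeq : ∀ i (h : (A i).Nonempty), rA i = ((A i).max' h).val := by
    intro i h; simp [hrA, dif_pos h]
  have hmemA : ∀ i, (A i).Nonempty → ∀ v : Fin m, (v ∈ A i ↔ lA i ≤ v.val ∧ v.val ≤ rA i) := by
    intro i h v
    rw [hlAeq i h, hrAeq i h]
    constructor
    · intro hv; exact ⟨(A i).min'_le v hv, (A i).le_max' v hv⟩
    · rintro ⟨h1, h2⟩
      exact mem_of_connSet (hconn i) ((A i).min'_mem h) ((A i).max'_mem h) h1 h2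
  have hlrA : ∀ i, (A i).Nonempty → lA i ≤ rA i := by
    intro i h
    have := ((hmemA i h _).1 ((A i).min'_mem h)).2
    rw [hlAeq i h]
    exact this
  have hrAm : ∀ i, (A i).Nonempty → rA i < m := by
    intro i h
    rw [hrAeq i h]
    exact ((A i).max' h).isLt
  have hcardA : ∀ i, (A i).Nonempty → (A i).card = rA i - lA i + 1 := by
    intro i h
    have he : A i = iv m (lA i) (rA i + 1) := by
      ext v
      rw [hmemA i h v, mem_iv]
      omega
    rw [he, card_iv]
    have h1 := hrAm i h
    have h2 := hlrA i h
    omega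
  -- the agent universe U of approved items
  set U : Finset (Fin m) := univ.filter (fun v : Fin m => ∃ j, v ∈ A j) with hU
  have hAU : ∀ i, A i ⊆ U := by
    intro i v hv
    rw [hU, Finset.mem_filter]
    exact ⟨Finset.mem_univ v, i, hv⟩
  -- welfare decomposition for any connected allocation
  have hsumU : ∀ π'' : N → Finset (Fin m), IsConnAlloc (SimpleGraph.pathGraph m) π'' →
      ∑ i, (π'' i ∩ U).card = U.card := by
    intro π'' h''
    obtain ⟨-, -, hdisj, hcov⟩ := h''
    have hbU : U = univ.biUnion (fun i => π'' i ∩ U) := by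
      ext v
      simp only [Finset.mem_biUnion, Finset.mem_univ, true_and, Finset.mem_inter]
      constructor
      · intro hv
        obtain ⟨i, hi⟩ := hcov v (Finset.mem_univ v)
        exact ⟨i, hi, hv⟩
      · rintro ⟨i, -, hv⟩; exact hv
    calc ∑ i, (π'' i ∩ U).card = (univ.biUnion fun i => π'' i ∩ U).card := by
          rw [Finset.card_biUnion]
          intro i _ j _ hij
          exact Finset.disjoint_of_subset_left Finset.inter_subset_left
            (Finset.disjoint_of_subset_right Finset.inter_subset_left (hdisj i j hij))
      _ = U.card := by rw [← hbU]
  have hwelfare_ub : ∀ π'' : N → Finset (Fin m), IsConnAlloc (SimpleGraph.pathGraph m) π'' →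
      ∑ i, u i (π'' i) ≤ (U.card : ℝ) := by
    intro π'' h''
    have h1 : ∀ i, (π'' i ∩ A i).card ≤ (π'' i ∩ U).card := by
      intro i
      exact Finset.card_le_card (Finset.inter_subset_inter (le_refl _) (hAU i))
    calc ∑ i, u i (π'' i) = ∑ i, ((π'' i ∩ A i).card : ℝ) := by
          apply Finset.sum_congr rfl; intro i _; rw [hu]
      _ ≤ ∑ i, ((π'' i ∩ U).card : ℝ) := by
          apply Finset.sum_le_sum
          intro i _
          exact_mod_cast h1 i
      _ = (U.card : ℝ) := by rw [← Nat.cast_sum, hsumU π'' h'']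
  -- mms upper bound
  have hmms_ub : ∀ i, mmsVal N (SimpleGraph.pathGraph m) (u i) ≤ (((A i).card / n : ℕ) : ℝ) := by
    intro i
    apply Real.sSup_le
    · rintro x ⟨P, hP, rfl⟩
      obtain ⟨-, -, hdisj, hcov⟩ := hP
      have hsplit : ∑ j, (P j ∩ A i).card = (A i).card := by
        have hbU : A i = univ.biUnion (fun j => P j ∩ A i) := by
          ext v
          simp only [Finset.mem_biUnion, Finset.mem_univ, true_and, Finset.mem_inter]
          constructor
          · intro hv
            obtain ⟨j, hj⟩ := hcov v (Finset.mem_univ v)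
            exact ⟨j, hj, hv⟩
          · rintro ⟨j, -, hv⟩; exact hv
        calc ∑ j, (P j ∩ A i).card = (univ.biUnion fun j => P j ∩ A i).card := by
              rw [Finset.card_biUnion]
              intro a _ b _ hab
              exact Finset.disjoint_of_subset_left Finset.inter_subset_left
                (Finset.disjoint_of_subset_right Finset.inter_subset_left (hdisj a b hab))
          _ = (A i).card := by rw [← hbU]
      have hex : ∃ j₀, (P j₀ ∩ A i).card ≤ (A i).card / n := by
        by_contra hcon
        push_neg at hcon
        have h1 : n * ((A i).card / n + 1) ≤ ∑ j, (P j ∩ A i).card := by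
          have := Finset.card_nsmul_le_sum Finset.univ (fun j => (P j ∩ A i).card)
            ((A i).card / n + 1) (fun j _ => hcon j)
          simpa [smul_eq_mul] using this
        rw [Nat.mul_succ] at h1
        have h2 := Nat.div_add_mod (A i).card n
        have h3 := Nat.mod_lt (A i).card hn0
        omega
      obtain ⟨j₀, hj₀⟩ := hex
      have hbdd : BddBelow (Set.range fun j => u i (P j)) := by
        refine ⟨0, ?_⟩
        rintro y ⟨j, rfl⟩
        show (0 : ℝ) ≤ u i (P j)
        rw [hu]
        positivity
      calc sInf (Set.range fun j => u i (P j)) ≤ u i (P j₀) := csInf_le hbdd ⟨j₀, rfl⟩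
        _ = ((P j₀ ∩ A i).card : ℝ) := hu i _
        _ ≤ (((A i).card / n : ℕ) : ℝ) := by exact_mod_cast hj₀
    · positivity
  -- sort agents with nonempty approval sets by (left endpoint, right endpoint)
  let σ : N ≃ Fin n := Fintype.equivFin N
  set key : N → ℕ ×ₗ (ℕ ×ₗ Fin n) := fun i => toLex (lA i, toLex (rA i, σ i)) with hkey
  have keyinj : Function.Injective key := by
    intro a b h
    have h1 : (lA a, toLex (rA a, σ a)) = (lA b, toLex (rA b, σ b)) := toLex_inj.1 h
    have h2 : (rA a, σ a) = (rA b, σ b) := toLex_inj.1 (congrArg Prod.snd h1)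
    exact σ.injective (congrArg Prod.snd h2)
  set rel : N → N → Prop := fun a b => key a ≤ key b with hrel
  haveI hdec : DecidableRel rel := fun a b => inferInstanceAs (Decidable (key a ≤ key b))
  haveI : IsTrans N rel := ⟨fun a b c hab hbc => le_trans hab hbc⟩
  haveI : Std.Antisymm rel := ⟨fun a b h1 h2 => keyinj (le_antisymm h1 h2)⟩
  haveI : Std.Total rel := ⟨fun a b => le_total (key a) (key b)⟩
  haveI : Std.Refl rel := ⟨fun a => le_refl (key a)⟩
  set L : List N := Finset.sort (univ.filter fun i => (A i).Nonempty) rel with hL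
  have hLmem : ∀ i, i ∈ L ↔ (A i).Nonempty := by
    intro i
    rw [hL, Finset.mem_sort]
    simp [Finset.mem_filter]
  have hLnd : L.Nodup := Finset.sort_nodup _ rel
  have hLsorted : L.Pairwise rel := Finset.pairwise_sort _ rel
  set p : ℕ := L.length with hp
  have hpn : p ≤ n := by
    rw [hp, hL, Finset.length_sort]
    calc (univ.filter fun i => (A i).Nonempty).card ≤ (univ : Finset N).card :=
          Finset.card_filter_le _ _
      _ = n := Finset.card_univ
  have hkeyle : ∀ a b : N, (A a).Nonempty → (A b).Nonempty → rel a b →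
      lA a ≤ lA b ∧ rA a ≤ rA b := by
    intro a b ha hb hab
    have hab' : toLex (lA a, toLex (rA a, σ a)) ≤ toLex (lA b, toLex (rA b, σ b)) := hab
    simp only [Prod.Lex.le_iff, ofLex_toLex] at hab'
    rcases hab' with h | ⟨h1, h2⟩ -- h2 may itself be a disjunction
    · refine ⟨le_of_lt h, ?_⟩
      by_contra hcon
      push_neg at hcon
      have e1 := hlAeq a ha
      have e2 := hlAeq b hb
      have e3 := hrAeq a ha
      have e4 := hrAeq b hb
      refine hnonnested a b ha hb ⟨?_, ?_⟩ <;> rw [Fin.lt_def] <;> omega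
    · rcases h2 with h2 | ⟨h2, -⟩
      · exact ⟨le_of_eq h1, le_of_lt h2⟩
      · exact ⟨le_of_eq h1, le_of_eq h2⟩
  set g : ℕ → N := fun k => L.getD k i₀ with hg
  have hgget : ∀ (k) (hk : k < p), g k = L.get ⟨k, hk⟩ := by
    intro k hk
    rw [hg]
    simp only
    rw [List.getD_eq_getElem L i₀ hk]
    rfl
  have hgL : ∀ k, k < p → g k ∈ L := by
    intro k hk
    rw [hgget k hk]
    exact List.get_mem _ _
  have hgne : ∀ k, k < p → (A (g k)).Nonempty := fun k hk => (hLmem _).1 (hgL k hk)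
  have hrelg : ∀ a b, a ≤ b → b < p → rel (g a) (g b) := by
    intro a b hab hb
    rw [hgget a (lt_of_le_of_lt hab hb), hgget b hb]
    exact hLsorted.rel_get_of_le (Fin.mk_le_mk.2 hab)
  have hsl : ∀ a b, a ≤ b → b < p → lA (g a) ≤ lA (g b) := fun a b hab hb =>
    (hkeyle _ _ (hgne a (lt_of_le_of_lt hab hb)) (hgne b hb) (hrelg a b hab hb)).1
  have hsr : ∀ a b, a ≤ b → b < p → rA (g a) ≤ rA (g b) := fun a b hab hb =>
    (hkeyle _ _ (hgne a (lt_of_le_of_lt hab hb)) (hgne b hb) (hrelg a b hab hb)).2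
  by_cases hex : ∃ i, (A i).Nonempty
  · -- main case: some agent approves something
    obtain ⟨iw, hiw⟩ := hex
    have hp0 : 0 < p := by
      rw [hp]
      exact List.length_pos_iff.2 (List.ne_nil_of_mem ((hLmem iw).2 hiw))
    obtain ⟨c, hc0, hcp, hcmono, hquota, hcover⟩ :=
      cuts_exist n m p hpn hp0 (fun k => lA (g k)) (fun k => rA (g k)) hsl hsr
        (fun k hk => hlrA _ (hgne k hk)) (fun k hk => hrAm _ (hgne k hk))
    set idx : N → ℕ := fun i => L.idxOf i with hidx
    have hidxlt : ∀ i, i ∈ L → idx i < p := fun i hi => List.idxOf_lt_length_iff.2 hi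
    have hgidx : ∀ i (hi : i ∈ L), g (idx i) = i := by
      intro i hi
      rw [hgget _ (hidxlt i hi)]
      exact List.idxOf_get _
    have hidxg : ∀ k (hk : k < p), idx (g k) = k := by
      intro k hk
      have h1 : idx (g k) < p := hidxlt _ (hgL k hk)
      have h2 : L.get ⟨idx (g k), h1⟩ = L.get ⟨k, hk⟩ := by
        rw [List.idxOf_get h1]
        exact hgget k hk
      have h3 := hLnd.get_inj_iff.1 h2
      exact congrArg Fin.val h3
    set π : N → Finset (Fin m) :=
      fun i => if i ∈ L then iv m (c (idx i)) (c (idx i + 1)) else ∅ with hπ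
    have hπL : ∀ i ∈ L, π i = iv m (c (idx i)) (c (idx i + 1)) := fun i hi => if_pos hi
    have hπn : ∀ i, i ∉ L → π i = ∅ := fun i hi => if_neg hi
    have halloc : IsConnAlloc (SimpleGraph.pathGraph m) π := by
      refine ⟨fun i => Finset.subset_univ _, ?_, ?_, ?_⟩
      · intro i
        by_cases hi : i ∈ L
        · rw [hπL i hi]; exact connSet_iv m _ _
        · rw [hπn i hi]; exact connSet_empty
      · have hdis : ∀ a b, a ∈ L → b ∈ L → idx a < idx b → Disjoint (π a) (π b) := by
          intro a b ha hb hab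
          rw [hπL a ha, hπL b hb, Finset.disjoint_left]
          intro v hv hv'
          rw [mem_iv] at hv hv'
          have h1 : c (idx a + 1) ≤ c (idx b) := hcmono _ _ (by omega)
            (le_of_lt (hidxlt b hb))
          omega
        intro i j hij
        by_cases hi : i ∈ L
        · by_cases hj : j ∈ L
          · have hne : idx i ≠ idx j := by
              intro h
              apply hij
              rw [← hgidx i hi, ← hgidx j hj, h]
            rcases lt_or_gt_of_ne hne with h | h
            · exact hdis i j hi hj h
            · exact (hdis j i hj hi h).symm
          · rw [hπn j hj]; exact Finset.disjoint_empty_right _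
        · rw [hπn i hi]; exact Finset.disjoint_empty_left _
      · intro v _
        obtain ⟨k, hk, h1, h2⟩ := exists_step c p v.val hp0
          (by rw [hc0]; exact Nat.zero_le _) (by rw [hcp]; exact v.isLt)
        refine ⟨g k, ?_⟩
        rw [hπL _ (hgL k hk), hidxg k hk, mem_iv]
        exact ⟨h1, h2⟩
    have hπU : ∀ i, π i ∩ U ⊆ π i ∩ A i := by
      intro i v hv
      rw [Finset.mem_inter] at hv ⊢
      obtain ⟨hv1, hv2⟩ := hv
      refine ⟨hv1, ?_⟩
      by_cases hi : i ∈ L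
      · rw [hπL i hi, mem_iv] at hv1
        rw [hU, Finset.mem_filter] at hv2
        obtain ⟨-, j, hj⟩ := hv2
        have hjne : (A j).Nonempty := ⟨v, hj⟩
        have hjL : j ∈ L := (hLmem j).2 hjne
        have hjv := (hmemA j hjne v).1 hj
        have hc' := hcover (idx i) (hidxlt i hi) v.val hv1.1 hv1.2 (idx j) (hidxlt j hjL)
          (by rw [hgidx j hjL]; exact hjv.1) (by rw [hgidx j hjL]; exact hjv.2)
        rw [hgidx i hi] at hc'
        exact (hmemA i ((hLmem i).1 hi) v).2 hc'
      · rw [hπn i hi] at hv1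
        exact absurd hv1 (Finset.notMem_empty v)
    have hwelf : (U.card : ℝ) ≤ ∑ i, u i (π i) := by
      have h1 : ∀ i, (π i ∩ U).card ≤ (π i ∩ A i).card :=
        fun i => Finset.card_le_card (hπU i)
      calc (U.card : ℝ) = ∑ i, ((π i ∩ U).card : ℝ) := by
            rw [← Nat.cast_sum, hsumU π halloc]
        _ ≤ ∑ i, ((π i ∩ A i).card : ℝ) :=
            Finset.sum_le_sum (fun i _ => by exact_mod_cast h1 i)
        _ = ∑ i, u i (π i) := by
            apply Finset.sum_congr rfl
            intro i _
            rw [hu]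
    have hmms : IsMMS (SimpleGraph.pathGraph m) u π := by
      intro i
      refine le_trans (hmms_ub i) ?_
      rw [hu]
      have hqle : (A i).card / n ≤ (π i ∩ A i).card := by
        by_cases hi : i ∈ L
        · have hkp : idx i < p := hidxlt i hi
          have hine : (A i).Nonempty := (hLmem i).1 hi
          have hgi : g (idx i) = i := hgidx i hi
          have hq := hquota (idx i) hkp
          rw [hgi] at hq
          have hsub : iv m (max (c (idx i)) (lA i)) (min (c (idx i + 1)) (rA i + 1))
              ⊆ π i ∩ A i := by
            intro v hv
            rw [mem_iv] at hv
            have e1 := le_trans (le_max_left (c (idx i)) (lA i)) hv.1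
            have e2 := lt_of_lt_of_le hv.2 (min_le_left _ _)
            have e3 := le_trans (le_max_right (c (idx i)) (lA i)) hv.1
            have e4 := lt_of_lt_of_le hv.2 (min_le_right _ _)
            rw [Finset.mem_inter, hπL i hi, mem_iv]
            exact ⟨⟨e1, e2⟩, (hmemA i hine v).2 ⟨e3, by omega⟩⟩
          have hcard : (A i).card / n
              ≤ (iv m (max (c (idx i)) (lA i)) (min (c (idx i + 1)) (rA i + 1))).card := by
            rw [card_iv]
            have h2 : rA i + 1 ≤ m := by
              have := hrAm i hine
              omega
            have h4 : min (min (c (idx i + 1)) (rA i + 1)) m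
                = min (c (idx i + 1)) (rA i + 1) :=
              min_eq_left (le_trans (min_le_right _ _) h2)
            rw [h4, hcardA i hine]
            omega
          exact le_trans hcard (Finset.card_le_card hsub)
        · have hAe : A i = ∅ := Finset.not_nonempty_iff_eq_empty.1 (fun h => hi ((hLmem i).2 h))
          rw [hAe]
          simp
      exact_mod_cast hqle
    exact ⟨π, halloc, hmms, fun π' h' => le_trans (hwelfare_ub π' h') hwelf⟩
  · -- degenerate case: nobody approves anything
    push_neg at hex
    have hA0 : ∀ i, A i = ∅ := fun i => hex i
    set π : N → Finset (Fin m) := fun i => if i = i₀ then (univ : Finset (Fin m)) else ∅ with hπ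
    have hu0 : ∀ i X, u i X = 0 := by
      intro i X
      rw [hu, hA0]
      simp
    have halloc : IsConnAlloc (SimpleGraph.pathGraph m) π := by
      refine ⟨fun i => Finset.subset_univ _, ?_, ?_, ?_⟩
      · intro i
        rw [hπ]
        dsimp only
        split
        · have huniv : (univ : Finset (Fin m)) = iv m 0 m := by
            ext v
            rw [mem_iv]
            simp [v.isLt]
          rw [huniv]
          exact connSet_iv m 0 m
        · exact connSet_empty
      · intro i j hij
        rw [hπ]
        dsimp only
        by_cases hi : i = i₀
        · subst hi
          rw [if_pos rfl, if_neg (Ne.symm hij)]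
          exact Finset.disjoint_empty_right _
        · rw [if_neg hi]
          exact Finset.disjoint_empty_left _
      · intro v _
        exact ⟨i₀, by rw [hπ]; simp⟩
    have hmms : IsMMS (SimpleGraph.pathGraph m) u π := by
      intro i
      rw [hu0]
      apply Real.sSup_le _ le_rfl
      rintro x ⟨P, hP, rfl⟩
      have hr : (Set.range fun j => u i (P j)) = {0} := by
        ext y
        simp [hu0, eq_comm]
      rw [hr, csInf_singleton]
    refine ⟨π, halloc, hmms, ?_⟩
    intro π' h'
    simp [hu0]
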